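/- Let K be a field of characteristic zero, let q ∈ K[X] be nonzero with deg(q) ≤ d, and let M ∈ M_n(K(X)) be such that qM has polynomial entries of degree at most d. Let u ∈ K[X]^n be a row vector with polynomial entries, and let P = Δ_n(u) be the n×n matrix with rows u, δ(u), ..., δ^{n−1}(u). Then: (1) q^{n−1}·P has polynomial entries of degree at most deg(u) + (n−1)d; (2) if P is invertible, then every entry of P⁻¹ has degree (as a rational function) at most n·deg(u) + n(n−1)d/2. -/

import Mathlib

/-- `δ(u) = u M + u′` for a row vector `u`, the derivation `der` being applied
entrywise. -/
def cvDelta {F : Type*} [Field F] {n : ℕ} (der : F → F)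
    (M : Matrix (Fin n) (Fin n) F) (u : Fin n → F) : Fin n → F :=
  Matrix.vecMul u M + fun i => der (u i)

/-- `Δₙ(u)`: the `n × n` matrix whose rows are `u, δ(u), …, δ^{n−1}(u)`. -/
def cvDeltaMat {F : Type*} [Field F] {n : ℕ} (der : F → F)
    (M : Matrix (Fin n) (Fin n) F) (u : Fin n → F) : Matrix (Fin n) (Fin n) F :=
  Matrix.of fun i j => (cvDelta der M)^[(i : ℕ)] u j

/-- The degree of a rational function: the maximum of the degrees of its
numerator and denominator written in lowest terms. -/
noncomputable def ratFuncDeg {K : Type*} [Field K] (f : RatFunc K) : ℕ :=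
  max f.num.natDegree f.denom.natDegree


open Polynomial

section CVAux

variable {K : Type*} [Field K]

local notation "φ" => algebraMap (Polynomial K) (RatFunc K)

variable (der : RatFunc K → RatFunc K)
  (h_add : ∀ a b : RatFunc K, der (a + b) = der a + der b)
  (h_mul : ∀ a b : RatFunc K, der (a * b) = a * der b + der a * b)
  (h_X : der RatFunc.X = 1)
  (h_C : ∀ c : K, der (RatFunc.C c) = 0)

include h_mul in
lemma cv_der_one : der 1 = 0 := by
  have h := h_mul 1 1
  simp only [mul_one, one_mul] at h
  exact add_eq_left.mp h.symm

include h_mul in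
lemma cv_der_pow (x : RatFunc K) (k : ℕ) :
    der (x ^ (k + 1)) = ((k + 1 : ℕ) : RatFunc K) * x ^ k * der x := by
  induction k with
  | zero => simp
  | succ k ih =>
    have : x ^ (k + 2) = x * x ^ (k + 1) := by ring
    rw [this, h_mul, ih]
    push_cast
    ring

include h_add h_mul h_X h_C in
lemma cv_der_algebraMap (p : Polynomial K) : der (φ p) = φ (derivative p) := by
  induction p using Polynomial.induction_on' with
  | add p q hp hq => rw [map_add, h_add, hp, hq, derivative_add, map_add]
  | monomial k a =>
    rw [← C_mul_X_pow_eq_monomial, map_mul, map_pow, RatFunc.algebraMap_C,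
      RatFunc.algebraMap_X, h_mul]
    rcases k with _ | m
    · simp [cv_der_one der h_mul, h_C]
    · rw [cv_der_pow der h_mul, h_X, h_C, derivative_C_mul_X_pow]
      rw [map_mul, map_pow, RatFunc.algebraMap_C, RatFunc.algebraMap_X, map_mul,
        map_natCast, Nat.add_sub_cancel]
      push_cast
      ring

lemma cv_pow_degree (q : Polynomial K) {d : ℕ} (hqd : q.degree ≤ (d : WithBot ℕ)) (k : ℕ) :
    (q ^ k).degree ≤ ((k * d : ℕ) : WithBot ℕ) := by
  induction k with
  | zero => simp [degree_one_le]
  | succ k ih =>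
    rw [pow_succ]
    refine (degree_mul_le _ _).trans ?_
    refine (add_le_add ih hqd).trans ?_
    rw [← Nat.cast_add]
    exact_mod_cast le_of_eq (by ring)

lemma cv_det_bound {n : ℕ} (A : Matrix (Fin n) (Fin n) (RatFunc K))
    (c : Fin n → Polynomial K) (p : Fin n → Fin n → Polynomial K) (b : Fin n → ℕ)
    (h : ∀ k l, φ (c k) * A k l = φ (p k l))
    (hb : ∀ k l, (p k l).degree ≤ ((b k : ℕ) : WithBot ℕ)) :
    ∃ g : Polynomial K, g.degree ≤ ((∑ k, b k : ℕ) : WithBot ℕ) ∧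
      φ (∏ k, c k) * A.det = φ g := by
  refine ⟨∑ σ : Equiv.Perm (Fin n), ((Equiv.Perm.sign σ : ℤ) : Polynomial K) *
      ∏ i, p (σ i) i, ?_, ?_⟩
  · refine (degree_sum_le _ _).trans (Finset.sup_le fun σ _ => ?_)
    refine (degree_mul_le _ _).trans ?_
    have h1 : (((Equiv.Perm.sign σ : ℤ) : Polynomial K)).degree ≤ 0 := degree_intCast_le _
    have h2 : (∏ i, p (σ i) i).degree ≤ ((∑ k, b k : ℕ) : WithBot ℕ) := by
      refine (degree_prod_le _ _).trans ?_
      calc ∑ i, (p (σ i) i).degree ≤ ∑ i, ((b (σ i) : ℕ) : WithBot ℕ) :=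
            Finset.sum_le_sum fun i _ => hb _ _
        _ = ((∑ i, b (σ i) : ℕ) : WithBot ℕ) := by push_cast; rfl
        _ = _ := by rw [Equiv.sum_comp σ b]
    calc _ ≤ 0 + ((∑ k, b k : ℕ) : WithBot ℕ) := add_le_add h1 h2
      _ = _ := zero_add _
  · rw [Matrix.det_apply, Finset.mul_sum, map_sum]
    refine Finset.sum_congr rfl fun σ _ => ?_
    rw [map_mul, map_intCast, map_prod]
    rw [mul_smul_comm, Units.smul_def, zsmul_eq_mul]
    congr 1
    rw [map_prod, ← Equiv.prod_comp σ (fun k => φ (c k)), ← Finset.prod_mul_distrib]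
    exact Finset.prod_congr rfl fun i _ => h _ _

lemma cv_ratFuncDeg_div_le (a b : Polynomial K) (hb : b ≠ 0) {N : ℕ}
    (ha' : a.natDegree ≤ N) (hb' : b.natDegree ≤ N) :
    ratFuncDeg (φ a / φ b) ≤ N := by
  by_cases hx : φ a / φ b = 0
  · rw [hx]
    simp [ratFuncDeg]
  have ha : a ≠ 0 := by
    rintro rfl; simp at hx
  have hnum : (φ a / φ b).num ∣ a := (RatFunc.num_dvd ha).mpr ⟨b, hb, rfl⟩
  have hden : (φ a / φ b).denom ∣ b := (RatFunc.denom_dvd hb).mpr ⟨a, rfl⟩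
  exact max_le ((natDegree_le_of_dvd hnum ha).trans ha')
    ((natDegree_le_of_dvd hden hb).trans hb')

end CVAux

set_option maxHeartbeats 1000000 in
set_option synthInstance.maxHeartbeats 400000 in
/-- Degree bounds for `P = Δₙ(u)` in the cyclic-vector method:
`q^{n−1} P` has polynomial entries of degree `≤ deg u + (n−1)d`, and if `P` is
invertible then the entries of `P⁻¹` have degree `≤ n·deg u + n(n−1)d/2`. -/
theorem cyclic_vector_matrix_degree_bounds {K : Type*} [Field K] [CharZero K] {n : ℕ}
    (der : RatFunc K → RatFunc K)
    (h_add : ∀ a b : RatFunc K, der (a + b) = der a + der b)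
    (h_mul : ∀ a b : RatFunc K, der (a * b) = a * der b + der a * b)
    (h_X : der RatFunc.X = 1)
    (h_C : ∀ c : K, der (RatFunc.C c) = 0)
    (q : Polynomial K) (hq : q ≠ 0) (d : ℕ) (hqd : q.degree ≤ (d : WithBot ℕ))
    (M : Matrix (Fin n) (Fin n) (RatFunc K))
    (hM : ∀ i j : Fin n, ∃ p : Polynomial K, p.degree ≤ (d : WithBot ℕ) ∧
      algebraMap (Polynomial K) (RatFunc K) q * M i j
        = algebraMap (Polynomial K) (RatFunc K) p)
    (u : Fin n → Polynomial K) :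
    (∀ i j : Fin n, ∃ p : Polynomial K,
      p.degree ≤ (((Finset.univ.sup fun l => (u l).natDegree) + (n - 1) * d : ℕ) : WithBot ℕ) ∧
      (algebraMap (Polynomial K) (RatFunc K) q) ^ (n - 1) *
        cvDeltaMat der M (fun l => algebraMap (Polynomial K) (RatFunc K) (u l)) i j
        = algebraMap (Polynomial K) (RatFunc K) p) ∧
    (IsUnit (cvDeltaMat der M (fun l => algebraMap (Polynomial K) (RatFunc K) (u l))).det →
      ∀ i j : Fin n,
        ratFuncDeg ((cvDeltaMat der M (fun l => algebraMap (Polynomial K) (RatFunc K) (u l)))⁻¹ i j)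
          ≤ n * (Finset.univ.sup fun l => (u l).natDegree) + n * (n - 1) / 2 * d) := by
  classical
  choose m hm1 hm2 using hM
  set D : ℕ := Finset.univ.sup fun l => (u l).natDegree with hD
  set uu : Fin n → RatFunc K := fun l => algebraMap (Polynomial K) (RatFunc K) (u l) with huu
  have hinj := RatFunc.algebraMap_injective K
  have hφq : algebraMap (Polynomial K) (RatFunc K) q ≠ 0 := by
    simpa [map_ne_zero_iff _ hinj] using hq
  -- the key induction on the rows
  have key : ∀ i : ℕ, ∃ p : Fin n → Polynomial K,
      (∀ j, (p j).degree ≤ ((D + i * d : ℕ) : WithBot ℕ)) ∧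
      ∀ j, algebraMap (Polynomial K) (RatFunc K) q ^ i * ((cvDelta der M)^[i] uu) j = algebraMap (Polynomial K) (RatFunc K) (p j) := by
    intro i
    induction i with
    | zero =>
      refine ⟨u, fun j => ?_, fun j => by simp [huu]⟩
      refine degree_le_natDegree.trans ?_
      have : (u j).natDegree ≤ D + 0 * d := by
        have h0 : (u j).natDegree ≤ D := by
          exact Finset.le_sup (f := fun l => (u l).natDegree) (Finset.mem_univ j)
        omega
      exact_mod_cast this
    | succ i ih =>
      obtain ⟨p, hp1, hp2⟩ := ih
      have harith : ((D + (i+1)*d : ℕ) : WithBot ℕ)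
          = ((D + i*d : ℕ) : WithBot ℕ) + ((d : ℕ) : WithBot ℕ) := by
        rw [← Nat.cast_add]
        congr 1
        ring
      have hqd' : (derivative q).degree ≤ ((d : ℕ) : WithBot ℕ) :=
        degree_derivative_le.trans hqd
      refine ⟨fun j => (∑ l, p l * m l j) + (q * derivative (p j)
        - C (i : K) * derivative q * p j), fun j => ?_, fun j => ?_⟩
      · rw [harith]
        refine (degree_add_le _ _).trans (max_le ?_ ?_)
        · refine (degree_sum_le _ _).trans (Finset.sup_le fun l _ => ?_)
          exact (degree_mul_le _ _).trans (add_le_add (hp1 l) (hm1 l j))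
        · refine (degree_sub_le _ _).trans (max_le ?_ ?_)
          · refine (degree_mul_le _ _).trans ?_
            rw [add_comm ((D + i*d : ℕ) : WithBot ℕ)]
            exact add_le_add hqd (degree_derivative_le.trans (hp1 j))
          · refine (degree_mul_le _ _).trans ?_
            rw [add_comm ((D + i*d : ℕ) : WithBot ℕ)]
            refine add_le_add ?_ (hp1 j)
            refine (degree_mul_le _ _).trans ?_
            calc (C (i:K)).degree + (derivative q).degree
                ≤ 0 + ((d : ℕ) : WithBot ℕ) := add_le_add degree_C_le hqd'
              _ = _ := zero_add _
      · set v : Fin n → RatFunc K := (cvDelta der M)^[i] uu with hv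
        have hcv : ((cvDelta der M)^[i+1] uu) j = (∑ l, v l * M l j) + der (v j) := by
          rw [Function.iterate_succ_apply']
          simp [cvDelta, Matrix.vecMul, dotProduct, hv]
        have hsum : algebraMap (Polynomial K) (RatFunc K) q ^ (i+1) * (∑ l, v l * M l j) = algebraMap (Polynomial K) (RatFunc K) (∑ l, p l * m l j) := by
          rw [Finset.mul_sum, map_sum]
          refine Finset.sum_congr rfl fun l _ => ?_
          have e : algebraMap (Polynomial K) (RatFunc K) q ^ (i+1) * (v l * M l j) = (algebraMap (Polynomial K) (RatFunc K) q ^ i * v l) * (algebraMap (Polynomial K) (RatFunc K) q * M l j) := by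
            ring
          rw [e, hp2 l, hm2 l j, ← map_mul]
        have h1 : algebraMap (Polynomial K) (RatFunc K) q ^ i * der (v j) + der (algebraMap (Polynomial K) (RatFunc K) q ^ i) * v j = algebraMap (Polynomial K) (RatFunc K) (derivative (p j)) := by
          rw [← h_mul, hp2 j, cv_der_algebraMap der h_add h_mul h_X h_C]
        have h2 : der (algebraMap (Polynomial K) (RatFunc K) q ^ i) = algebraMap (Polynomial K) (RatFunc K) (derivative (q ^ i)) := by
          rw [← map_pow, cv_der_algebraMap der h_add h_mul h_X h_C]
        rw [h2] at h1
        have h3 : q * derivative (q ^ i) = C (i:K) * derivative q * q ^ i := by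
          rcases i with _ | k
          · simp
          · rw [derivative_pow, Nat.add_sub_cancel, pow_succ]
            push_cast
            ring
        have hder : algebraMap (Polynomial K) (RatFunc K) q ^ (i+1) * der (v j)
            = algebraMap (Polynomial K) (RatFunc K) (q * derivative (p j) - C (i:K) * derivative q * p j) := by
          calc algebraMap (Polynomial K) (RatFunc K) q ^ (i+1) * der (v j)
              = algebraMap (Polynomial K) (RatFunc K) q * (algebraMap (Polynomial K) (RatFunc K) q ^ i * der (v j)) := by ring
            _ = algebraMap (Polynomial K) (RatFunc K) q * (algebraMap (Polynomial K) (RatFunc K) (derivative (p j)) - algebraMap (Polynomial K) (RatFunc K) (derivative (q ^ i)) * v j) := by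
                rw [← h1]; ring
            _ = algebraMap (Polynomial K) (RatFunc K) (q * derivative (p j)) - algebraMap (Polynomial K) (RatFunc K) (q * derivative (q ^ i)) * v j := by
                rw [map_mul, map_mul]; ring
            _ = algebraMap (Polynomial K) (RatFunc K) (q * derivative (p j))
                - algebraMap (Polynomial K) (RatFunc K) (C (i:K) * derivative q) * (algebraMap (Polynomial K) (RatFunc K) q ^ i * v j) := by
                rw [h3]; simp only [map_mul, map_pow]; ring
            _ = algebraMap (Polynomial K) (RatFunc K) (q * derivative (p j)) - algebraMap (Polynomial K) (RatFunc K) (C (i:K) * derivative q) * algebraMap (Polynomial K) (RatFunc K) (p j) := by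
                rw [hp2 j]
            _ = _ := by rw [← map_mul, ← map_sub, mul_assoc]
        rw [hcv, mul_add, hsum, hder, ← map_add]
  have hPentry : ∀ (i j : Fin n),
      cvDeltaMat der M uu i j = ((cvDelta der M)^[(i:ℕ)] uu) j := fun i j => rfl
  constructor
  · -- part 1
    intro i j
    obtain ⟨p, hp1, hp2⟩ := key (i : ℕ)
    have hile : (i : ℕ) ≤ n - 1 := by omega
    refine ⟨q ^ (n - 1 - (i:ℕ)) * p j, ?_, ?_⟩
    · refine (degree_mul_le _ _).trans ?_
      refine (add_le_add (cv_pow_degree q hqd (n - 1 - (i:ℕ))) (hp1 j)).trans ?_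
      rw [← Nat.cast_add]
      have : (n - 1 - (i:ℕ)) * d + (D + (i:ℕ) * d) = D + (n-1) * d := by
        have e : (n - 1 - (i:ℕ)) * d + (i:ℕ) * d = (n-1) * d := by
          rw [← Nat.add_mul, Nat.sub_add_cancel hile]
        omega
      exact_mod_cast le_of_eq this
    · rw [hPentry i j, map_mul, map_pow, ← hp2 j, ← mul_assoc, ← pow_add,
        Nat.sub_add_cancel hile]
  · -- part 2
    intro hU i j
    set P : Matrix (Fin n) (Fin n) (RatFunc K) := cvDeltaMat der M uu with hP
    have hdet : P.det ≠ 0 := hU.ne_zero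
    have hrows : ∀ k : Fin n, ∃ pk : Fin n → Polynomial K,
        (∀ l, (pk l).degree ≤ ((D + (k:ℕ)*d : ℕ) : WithBot ℕ)) ∧
        ∀ l, algebraMap (Polynomial K) (RatFunc K) (q^(k:ℕ)) * P k l = algebraMap (Polynomial K) (RatFunc K) (pk l) := by
      intro k
      obtain ⟨p, h1, h2⟩ := key (k : ℕ)
      exact ⟨p, h1, fun l => by rw [map_pow, hPentry k l]; exact h2 l⟩
    choose pr hpr1 hpr2 using hrows
    have hs : ∑ k : Fin n, (k:ℕ) = n*(n-1)/2 := by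
      rw [Fin.sum_univ_eq_sum_range (fun k => k) n, Finset.sum_range_id]
    have hprodq : ∏ k : Fin n, q^(k:ℕ) = q ^ (n*(n-1)/2) := by
      rw [Finset.prod_pow_eq_pow_sum, hs]
    have hsumb : ∑ k : Fin n, (D + (k:ℕ)*d) = n*D + n*(n-1)/2*d := by
      rw [Finset.sum_add_distrib, Finset.sum_const, Finset.card_univ,
        Fintype.card_fin, smul_eq_mul, ← Finset.sum_mul, hs]
    have hφprod : algebraMap (Polynomial K) (RatFunc K) (∏ k : Fin n, q^(k:ℕ)) ≠ 0 := by
      rw [map_ne_zero_iff _ hinj, hprodq]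
      exact pow_ne_zero _ hq
    obtain ⟨g, hg1, hg2⟩ := cv_det_bound P (fun k => q^(k:ℕ)) pr
      (fun k => D + (k:ℕ)*d) hpr2 hpr1
    have hg0 : g ≠ 0 := by
      intro h0
      rw [h0, map_zero] at hg2
      exact (mul_ne_zero hφprod hdet) hg2
    -- the adjugate entry
    set A : Matrix (Fin n) (Fin n) (RatFunc K) := P.updateRow j (Pi.single i 1) with hA
    have hArows : ∀ k l : Fin n, algebraMap (Polynomial K) (RatFunc K) (q^(k:ℕ)) * A k l
        = algebraMap (Polynomial K) (RatFunc K) (if k = j then (if l = i then q^(j:ℕ) else 0) else pr k l) := by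
      intro k l
      rcases eq_or_ne k j with rfl | hkj
      · rw [if_pos rfl, hA, Matrix.updateRow_self, Pi.single_apply]
        split_ifs with h
        · rw [mul_one]
        · rw [mul_zero, map_zero]
      · rw [if_neg hkj, hA, Matrix.updateRow_ne hkj]
        exact hpr2 k l
    have hArowsdeg : ∀ k l : Fin n,
        ((if k = j then (if l = i then q^(j:ℕ) else 0) else pr k l) : Polynomial K).degree
        ≤ ((D + (k:ℕ)*d : ℕ) : WithBot ℕ) := by
      intro k l
      rcases eq_or_ne k j with rfl | hkj
      · rw [if_pos rfl]
        split_ifs with h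
        · refine (cv_pow_degree q hqd _).trans ?_
          exact_mod_cast Nat.le_add_left _ _
        · simp
      · rw [if_neg hkj]
        exact hpr1 k l
    obtain ⟨h, hh1, hh2⟩ := cv_det_bound A (fun k => q^(k:ℕ))
      (fun k l => if k = j then (if l = i then q^(j:ℕ) else 0) else pr k l)
      (fun k => D + (k:ℕ)*d) hArows hArowsdeg
    have hPinv : P⁻¹ i j = algebraMap (Polynomial K) (RatFunc K) h / algebraMap (Polynomial K) (RatFunc K) g := by
      rw [Matrix.inv_def, Ring.inverse_eq_inv', Matrix.smul_apply, smul_eq_mul,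
        inv_mul_eq_div, Matrix.adjugate_apply, ← hA,
        ← mul_div_mul_left A.det P.det hφprod, hh2, hg2]
    rw [hPinv]
    refine cv_ratFuncDeg_div_le h g hg0 ?_ ?_
    · exact natDegree_le_iff_degree_le.mpr (hh1.trans (by rw [hsumb]))
    · exact natDegree_le_iff_degree_le.mpr (hg1.trans (by rw [hsumb]))
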